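/- Let μ > 0, let N ≥ 1 be an integer, and let e, g ∈ ℝⁿ. Then g is a subgradient of the ℓ1 norm at e (i.e., ‖z‖₁ ≥ ‖e‖₁ + ⟨g, z − e⟩ for all z ∈ ℝⁿ) if and only if N·e = S_μ(N·e + μ·g), equivalently e = (1/N)·S_μ(N·e + μ·g). -/

import Mathlib

open scoped RealInnerProductSpace

/-- The soft-thresholding (shrinkage) operator on `ℝⁿ`, defined componentwise by
`(S_λ(x))ᵢ = sign(xᵢ) · max(|xᵢ| − λ, 0)`. -/
noncomputable def softThresh {n : ℕ} (lam : ℝ) (x : EuclideanSpace ℝ (Fin n)) :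
    EuclideanSpace ℝ (Fin n) :=
  WithLp.toLp 2 (fun i => Real.sign (x i) * max (|x i| - lam) 0)

lemma scalar_iff (μ : ℝ) (hμ : 0 < μ) (x g : ℝ) :
    x = Real.sign (x + μ * g) * max (|x + μ * g| - μ) 0 ↔ (|g| ≤ 1 ∧ g * x = |x|) := by
  constructor
  · intro h
    rcases lt_trichotomy (x + μ * g) 0 with ha | ha | ha
    · rw [Real.sign_of_neg ha, abs_of_neg ha] at h
      rcases le_or_gt (-(x + μ*g)) μ with hle | hlt
      · rw [max_eq_right (by linarith)] at h
        simp at h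
        subst h
        refine ⟨abs_le.2 ⟨by nlinarith, by nlinarith⟩, by simp⟩
      · rw [max_eq_left (by linarith)] at h
        have hg : g = -1 := by nlinarith
        subst hg
        have hx : x < 0 := by nlinarith
        rw [abs_of_neg hx]
        exact ⟨by simp, by ring⟩
    · have hmax : max (|x + μ*g| - μ) 0 = 0 := by rw [ha]; simp; linarith
      rw [hmax, mul_zero] at h
      subst h
      have hg : g = 0 := by
        have h0 : μ * g = 0 := by linarith
        rcases mul_eq_zero.1 h0 with h' | h'
        · linarith
        · exact h'
      subst hg; simp
    · rw [Real.sign_of_pos ha, abs_of_pos ha] at h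
      rcases le_or_gt (x + μ*g) μ with hle | hlt
      · rw [max_eq_right (by linarith)] at h
        simp at h
        subst h
        refine ⟨abs_le.2 ⟨by nlinarith, by nlinarith⟩, by simp⟩
      · rw [max_eq_left (by linarith)] at h
        have hg : g = 1 := by nlinarith
        subst hg
        have hx : 0 < x := by nlinarith
        rw [abs_of_pos hx]
        exact ⟨by simp, by ring⟩
  · rintro ⟨hg, hgx⟩
    rcases lt_trichotomy x 0 with hx | hx | hx
    · have hg1 : g = -1 := by
        rw [abs_of_neg hx] at hgx; nlinarith
      subst hg1
      have ha : x + μ * (-1) < 0 := by nlinarith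
      rw [Real.sign_of_neg ha, abs_of_neg ha, max_eq_left (by linarith)]
      ring
    · subst hx
      have hmax : max (|0 + μ*g| - μ) 0 = 0 := by
        rw [max_eq_right]
        have : |0 + μ * g| ≤ μ := by
          rw [zero_add, abs_mul, abs_of_pos hμ]
          nlinarith [abs_nonneg g]
        linarith
      rw [hmax, mul_zero]
    · have hg1 : g = 1 := by
        rw [abs_of_pos hx] at hgx; nlinarith
      subst hg1
      have ha : 0 < x + μ * 1 := by nlinarith
      rw [Real.sign_of_pos ha, abs_of_pos ha, max_eq_left (by linarith)]
      ring


lemma subgrad_iff {n : ℕ} (e g : EuclideanSpace ℝ (Fin n)) :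
    (∀ z : EuclideanSpace ℝ (Fin n), (∑ i, |e i|) + ⟪g, z - e⟫ ≤ ∑ i, |z i|) ↔
      ∀ i, |g i| ≤ 1 ∧ g i * e i = |e i| := by
  constructor
  · intro h i
    have hz : ∀ t : ℝ, |e i| + g i * (t - e i) ≤ |t| := by
      intro t
      set z : EuclideanSpace ℝ (Fin n) := WithLp.toLp 2 (Function.update e i t) with hzdef
      have hthis := h z
      simp only [PiLp.inner_apply, RCLike.inner_apply', conj_trivial] at hthis
      have hinner : ∑ j, g j * (z - e) j = g i * (t - e i) := by
        rw [Finset.sum_eq_single i]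
        · simp [hzdef]
        · intro j _ hj
          have : (z - e) j = 0 := by
            simp [hzdef, PiLp.sub_apply, Function.update_of_ne hj]
          rw [this, mul_zero]
        · simp
      rw [hinner] at hthis
      have hsum : ∑ j, |z j| = (∑ j, |e j|) - |e i| + |t| := by
        have h1 : (fun j => |z j|) = Function.update (fun j => |e j|) i |t| := by
          funext j
          rcases eq_or_ne j i with rfl | hj
          · simp [hzdef]
          · simp [hzdef, Function.update_of_ne hj]
        calc ∑ j, |z j| = ∑ j, Function.update (fun j => |e j|) i |t| j := by rw [h1]
          _ = (∑ j, |e j|) - |e i| + |t| := by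
              rw [Finset.sum_update_of_mem (Finset.mem_univ i),
                Finset.sum_sdiff_eq_sub (by simp)]
              simp; ring
      rw [hsum] at hthis
      linarith
    have h1 : g i ≤ 1 := by
      have h0 := hz (e i + 1)
      have h2 : |e i + 1| ≤ |e i| + 1 := by simpa using abs_add_le (e i) 1
      simp at h0; linarith
    have h2 : -1 ≤ g i := by
      have h0 := hz (e i - 1)
      have h3 : |e i - 1| ≤ |e i| + 1 := by simpa [sub_eq_add_neg] using abs_add_le (e i) (-1)
      simp at h0; linarith
    have hg : |g i| ≤ 1 := abs_le.2 ⟨h2, h1⟩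
    refine ⟨hg, le_antisymm ?_ ?_⟩
    · calc g i * e i ≤ |g i * e i| := le_abs_self _
        _ = |g i| * |e i| := abs_mul _ _
        _ ≤ 1 * |e i| := by gcongr
        _ = |e i| := one_mul _
    · have h0 := hz 0; simp at h0; linarith
  · intro h z
    simp only [PiLp.inner_apply, RCLike.inner_apply', conj_trivial]
    have heq : (∑ i, |e i|) + ∑ i, g i * (z - e) i
        = ∑ i, (|e i| + g i * (z i - e i)) := by
      rw [Finset.sum_add_distrib]
      simp [PiLp.sub_apply]
    rw [heq]
    apply Finset.sum_le_sum
    intro i _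
    obtain ⟨hg, hgx⟩ := h i
    have heq2 : |e i| + g i * (z i - e i) = g i * z i := by rw [mul_sub]; linarith
    rw [heq2]
    calc g i * z i ≤ |g i * z i| := le_abs_self _
      _ = |g i| * |z i| := abs_mul _ _
      _ ≤ 1 * |z i| := by gcongr
      _ = |z i| := one_mul _

/-- Let `μ > 0`, `N ≥ 1` an integer, and `e, g ∈ ℝⁿ`.  Then `g` is a subgradient of the `ℓ₁`
norm at `e` (i.e. `‖z‖₁ ≥ ‖e‖₁ + ⟨g, z − e⟩` for all `z`) if and only if
`N·e = S_μ(N·e + μ·g)`, equivalently `e = (1/N)·S_μ(N·e + μ·g)`. -/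
theorem l1_subgradient_iff_softThresh_fixed_point {n : ℕ} (μ : ℝ) (hμ : 0 < μ)
    (N : ℕ) (hN : 1 ≤ N) (e g : EuclideanSpace ℝ (Fin n)) :
    (∀ z : EuclideanSpace ℝ (Fin n), (∑ i, |e i|) + ⟪g, z - e⟫ ≤ ∑ i, |z i|) ↔
      ((N : ℝ) • e = softThresh μ ((N : ℝ) • e + μ • g) ∧
        e = (N : ℝ)⁻¹ • softThresh μ ((N : ℝ) • e + μ • g)) := by
  have hNpos : (0 : ℝ) < N := by exact_mod_cast hN
  have hfix : ((N : ℝ) • e = softThresh μ ((N : ℝ) • e + μ • g)) ↔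
      ∀ i, |g i| ≤ 1 ∧ g i * e i = |e i| := by
    rw [← (WithLp.ofLp_injective (p := 2) (V := Fin n → ℝ)).eq_iff, funext_iff]
    apply forall_congr'
    intro i
    have happ : softThresh μ ((N : ℝ) • e + μ • g) i
        = Real.sign ((N:ℝ) * e i + μ * g i) * max (|(N:ℝ) * e i + μ * g i| - μ) 0 := by
      simp [softThresh, PiLp.add_apply, PiLp.smul_apply, smul_eq_mul]
    have happ2 : ((N : ℝ) • e) i = (N:ℝ) * e i := rfl
    rw [happ, happ2, scalar_iff μ hμ]
    constructor
    · rintro ⟨hg, hgx⟩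
      refine ⟨hg, ?_⟩
      have hc : (N:ℝ) * (g i * e i) = (N:ℝ) * |e i| := by
        rw [abs_mul, abs_of_pos hNpos] at hgx; nlinarith
      exact mul_left_cancel₀ (ne_of_gt hNpos) hc
    · rintro ⟨hg, hgx⟩
      refine ⟨hg, ?_⟩
      rw [abs_mul, abs_of_pos hNpos]; nlinarith
  rw [subgrad_iff, ← hfix]
  constructor
  · intro h
    refine ⟨h, ?_⟩
    rw [← h, smul_smul, inv_mul_cancel₀ (ne_of_gt hNpos), one_smul]
  · rintro ⟨h, -⟩
    exact h
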